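/- Let L : M_n(ℂ) → M_n(ℂ) be a linear map that preserves the real subspace of traceless Hermitian matrices, and let g > 0 be such that for every traceless Hermitian X and every t ≥ 0, ‖exp(tL)(X)‖₁ ≤ e^{−gt}·‖X‖₁. Then for every traceless Hermitian matrix δρ, g·‖δρ‖₁ ≤ ‖L(δρ)‖₁. In particular, if δρ is traceless Hermitian and satisfies the Poisson-type equation L(δρ) = −b for some matrix b, then ‖δρ‖₁ ≤ (1/g)·‖b‖₁. -/

import Mathlib

open scoped ComplexOrder

attribute [local instance] Matrix.normedAddCommGroup Matrix.normedSpace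

/-- The trace norm of a matrix: `‖A‖₁ = Tr √(Aᴴ A)`.  For a Hermitian matrix this is
the sum of the absolute values of its eigenvalues. -/
noncomputable def traceNorm {n : ℕ} (A : Matrix (Fin n) (Fin n) ℂ) : ℝ :=
  ((Matrix.posSemidef_conjTranspose_mul_self A).1.eigenvectorUnitary.1 *
    Matrix.diagonal (((↑) : ℝ → ℂ) ∘ Real.sqrt ∘ (Matrix.posSemidef_conjTranspose_mul_self A).1.eigenvalues) *
    (star (Matrix.posSemidef_conjTranspose_mul_self A).1.eigenvectorUnitary :
      Matrix (Fin n) (Fin n) ℂ)).trace.re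

set_option synthInstance.maxHeartbeats 1000000
set_option maxHeartbeats 1000000

namespace GapAux

open Matrix

variable {n : ℕ}

notation "expL" => @NormedSpace.exp _ _ _ (@NonUnitalSeminormedRing.toIsTopologicalRing _ (@SeminormedRing.toNonUnitalSeminormedRing _ (@NormedRing.toSeminormedRing _ (@ContinuousLinearMap.toNormedRing ℂ _ _ _ _))))

lemma traceNorm_eq_cfc (A : Matrix (Fin n) (Fin n) ℂ) :
    traceNorm A = (cfc Real.sqrt (Aᴴ * A)).trace.re := by
  rw [(Matrix.posSemidef_conjTranspose_mul_self A).1.cfc_eq, IsHermitian.cfc,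
    Unitary.conjStarAlgAut_apply]
  rfl

lemma spectral_theorem' {M : Matrix (Fin n) (Fin n) ℂ} (hM : M.IsHermitian) :
    M = (hM.eigenvectorUnitary : Matrix (Fin n) (Fin n) ℂ) *
      diagonal (RCLike.ofReal ∘ hM.eigenvalues) *
      star (hM.eigenvectorUnitary : Matrix (Fin n) (Fin n) ℂ) :=
  hM.spectral_theorem

lemma conj_mul_conj (U : Matrix.unitaryGroup (Fin n) ℂ) (a b : Fin n → ℂ) :
    ((U : Matrix (Fin n) (Fin n) ℂ) * diagonal a * star (U : Matrix (Fin n) (Fin n) ℂ)) *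
      ((U : Matrix (Fin n) (Fin n) ℂ) * diagonal b * star (U : Matrix (Fin n) (Fin n) ℂ)) =
    (U : Matrix (Fin n) (Fin n) ℂ) * diagonal (a * b) * star (U : Matrix (Fin n) (Fin n) ℂ) := by
  have h1 : star (U : Matrix (Fin n) (Fin n) ℂ) * (U : Matrix (Fin n) (Fin n) ℂ) = 1 :=
    Unitary.coe_star_mul_self U
  simp only [mul_assoc]
  rw [← mul_assoc (star (U : Matrix (Fin n) (Fin n) ℂ)) (U : Matrix (Fin n) (Fin n) ℂ), h1,
    one_mul, ← mul_assoc (diagonal a) (diagonal b), diagonal_mul_diagonal]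
  rfl

lemma tn_conj (U : Matrix.unitaryGroup (Fin n) ℂ) (d : Fin n → ℝ) :
    traceNorm ((U : Matrix (Fin n) (Fin n) ℂ) * diagonal (fun i => (d i : ℂ)) *
      star (U : Matrix (Fin n) (Fin n) ℂ)) = ∑ i, |d i| := by
  set Uc : Matrix (Fin n) (Fin n) ℂ := (U : Matrix (Fin n) (Fin n) ℂ) with hUc
  set A : Matrix (Fin n) (Fin n) ℂ := Uc * diagonal (fun i => (d i : ℂ)) * star Uc with hA
  have hdiagstar : (diagonal fun i => ((d i : ℝ) : ℂ))ᴴ = diagonal fun i => ((d i : ℝ) : ℂ) := by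
    rw [diagonal_conjTranspose]
    have : (star fun i => ((d i : ℝ) : ℂ)) = fun i => ((d i : ℝ) : ℂ) := by
      funext i
      simp [Pi.star_apply, Complex.star_def, Complex.conj_ofReal]
    rw [this]
  have hAH : Aᴴ = A := by
    rw [hA]
    simp only [star_eq_conjTranspose, conjTranspose_mul, conjTranspose_conjTranspose,
      hdiagstar, mul_assoc]
  have habs : (Uc * diagonal (fun i => ((|d i| : ℝ) : ℂ)) * star Uc) ^ 2 = Aᴴ * A := by
    rw [hAH, hA, pow_two, conj_mul_conj, conj_mul_conj]
    have : ((fun i => ((|d i| : ℝ) : ℂ)) * fun i => ((|d i| : ℝ) : ℂ)) =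
        ((fun i => ((d i : ℝ) : ℂ)) * fun i => ((d i : ℝ) : ℂ)) := by
      funext i
      simp only [Pi.mul_apply, ← Complex.ofReal_mul, abs_mul_abs_self]
    rw [this]
  have hPSDdiag : (diagonal (fun i => ((|d i| : ℝ) : ℂ))).PosSemidef :=
    posSemidef_diagonal_iff.mpr fun i => by
      rw [Complex.zero_le_real]; exact abs_nonneg _
  have hPSD : (Uc * diagonal (fun i => ((|d i| : ℝ) : ℂ)) * star Uc).PosSemidef := by
    simpa [star_eq_conjTranspose] using hPSDdiag.mul_mul_conjTranspose_same Uc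
  have hsqrt : Uc * diagonal (fun i => ((|d i| : ℝ) : ℂ)) * star Uc =
      cfc Real.sqrt (Aᴴ * A) := by
    have hB : IsSelfAdjoint (Uc * diagonal (fun i => ((|d i| : ℝ) : ℂ)) * star Uc) := hPSD.1
    rw [← habs, ← cfc_comp_pow Real.sqrt 2 _ (ha := hB)]
    have hid := cfc_id' ℝ (Uc * diagonal (fun i => ((|d i| : ℝ) : ℂ)) * star Uc) hB
    refine hid.symm.trans (cfc_congr fun x hx => ?_)
    obtain ⟨i, rfl⟩ := hPSD.1.spectrum_real_eq_range_eigenvalues ▸ hx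
    simp [Real.sqrt_sq (hPSD.eigenvalues_nonneg i)]
  rw [traceNorm_eq_cfc, ← hsqrt, trace_mul_cycle, Unitary.coe_star_mul_self U, one_mul,
    trace_diagonal, ← Complex.ofReal_sum, Complex.ofReal_re]

lemma tn_herm {M : Matrix (Fin n) (Fin n) ℂ} (hM : M.IsHermitian) :
    traceNorm M = ∑ i, |hM.eigenvalues i| := by
  conv_lhs => rw [hM.spectral_theorem]
  have : (RCLike.ofReal ∘ hM.eigenvalues : Fin n → ℂ) = fun i => ((hM.eigenvalues i : ℝ) : ℂ) := by
    funext i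
    simp [RCLike.ofReal]
  rw [this]
  exact tn_conj hM.eigenvectorUnitary _

lemma row_norm (Q : Matrix (Fin n) (Fin n) ℂ) (hQ : Q * star Q = 1) (i : Fin n) :
    ∑ j, Complex.normSq (Q i j) = 1 := by
  have h := congrArg (fun M : Matrix (Fin n) (Fin n) ℂ => M i i) hQ
  simp only [Matrix.mul_apply, Matrix.one_apply_eq, Matrix.star_apply] at h
  have : ∀ j, Q i j * star (Q i j) = ((Complex.normSq (Q i j) : ℝ) : ℂ) := fun j =>
    Complex.mul_conj _
  rw [Finset.sum_congr rfl fun j _ => this j, ← Complex.ofReal_sum] at h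
  exact_mod_cast h

lemma pair_val (W V : Matrix.unitaryGroup (Fin n) ℂ) (μ s : Fin n → ℝ) :
    (Matrix.trace (((W : Matrix (Fin n) (Fin n) ℂ) * diagonal (fun i => (μ i : ℂ)) *
        star (W : Matrix (Fin n) (Fin n) ℂ)) *
      ((V : Matrix (Fin n) (Fin n) ℂ) * diagonal (fun i => (s i : ℂ)) *
        star (V : Matrix (Fin n) (Fin n) ℂ)))).re =
    ∑ i, ∑ j, μ i * s j *
      Complex.normSq ((star (W : Matrix (Fin n) (Fin n) ℂ) * (V : Matrix (Fin n) (Fin n) ℂ)) i j) := by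
  set Wc : Matrix (Fin n) (Fin n) ℂ := (W : Matrix (Fin n) (Fin n) ℂ)
  set Vc : Matrix (Fin n) (Fin n) ℂ := (V : Matrix (Fin n) (Fin n) ℂ)
  set Q : Matrix (Fin n) (Fin n) ℂ := star Wc * Vc with hQdef
  have hWs : Wc * star Wc = 1 := mem_unitaryGroup_iff.mp W.2
  have hsW : star Wc * Wc = 1 := mem_unitaryGroup_iff'.mp W.2
  have hstarQ : star Q = star Vc * Wc := by rw [hQdef, StarMul.star_mul, star_star]
  have key : (Wc * diagonal (fun i => (μ i : ℂ)) * star Wc) *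
      (Vc * diagonal (fun i => (s i : ℂ)) * star Vc) =
      Wc * (diagonal (fun i => (μ i : ℂ)) * (Q * (diagonal (fun i => (s i : ℂ)) * star Q))) *
        star Wc := by
    simp only [hstarQ, hQdef, mul_assoc, StarMul.star_mul, star_star]
    rw [hWs, mul_one]
  rw [key, Matrix.trace_mul_cycle, ← mul_assoc, hsW, one_mul]
  have hentry : ∀ i, (diagonal (fun i => (μ i : ℂ)) *
      (Q * (diagonal (fun i => (s i : ℂ)) * star Q))) i i =
      (((∑ j, μ i * s j * Complex.normSq (Q i j)) : ℝ) : ℂ) := by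
    intro i
    rw [Matrix.diagonal_mul, Matrix.mul_apply]
    have hterm : ∀ j, Q i j * (diagonal (fun i => (s i : ℂ)) * star Q) j i =
        (((s j * Complex.normSq (Q i j)) : ℝ) : ℂ) := by
      intro j
      rw [Matrix.diagonal_mul, Matrix.star_apply]
      have : Q i j * ((s j : ℂ) * star (Q i j)) = (s j : ℂ) * (Q i j * star (Q i j)) := by ring
      rw [this, show (star (Q i j)) = (starRingEnd ℂ) (Q i j) from rfl, Complex.mul_conj]
      push_cast
      ring
    rw [Finset.sum_congr rfl fun j _ => hterm j, ← Complex.ofReal_sum, ← Complex.ofReal_mul,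
      Finset.mul_sum]
    congr 1
    refine Finset.sum_congr rfl fun j _ => by ring
  rw [Matrix.trace]
  have hsum : ∑ i, ((diagonal (fun i => (μ i : ℂ)) *
      (Q * (diagonal (fun i => (s i : ℂ)) * star Q))).diag i) =
      ((∑ i, ∑ j, μ i * s j * Complex.normSq (Q i j) : ℝ) : ℂ) := by
    rw [Complex.ofReal_sum]
    exact Finset.sum_congr rfl fun i _ => hentry i
  rw [hsum, Complex.ofReal_re]

lemma ofReal_comp_eig {M : Matrix (Fin n) (Fin n) ℂ} (hM : M.IsHermitian) :
    (RCLike.ofReal ∘ hM.eigenvalues : Fin n → ℂ) = fun i => ((hM.eigenvalues i : ℝ) : ℂ) := by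
  funext i
  simp [RCLike.ofReal]

lemma pair_bound {M : Matrix (Fin n) (Fin n) ℂ} (hM : M.IsHermitian)
    (V : Matrix.unitaryGroup (Fin n) ℂ) (s : Fin n → ℝ) (hs : ∀ j, |s j| ≤ 1) :
    |(Matrix.trace (M * ((V : Matrix (Fin n) (Fin n) ℂ) * diagonal (fun i => (s i : ℂ)) *
        star (V : Matrix (Fin n) (Fin n) ℂ)))).re| ≤ traceNorm M := by
  rw [tn_herm hM]
  conv_lhs => rw [spectral_theorem' hM]
  rw [ofReal_comp_eig hM, pair_val hM.eigenvectorUnitary V hM.eigenvalues s]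
  set Wc : Matrix (Fin n) (Fin n) ℂ := (hM.eigenvectorUnitary : Matrix (Fin n) (Fin n) ℂ)
  set Vc : Matrix (Fin n) (Fin n) ℂ := (V : Matrix (Fin n) (Fin n) ℂ)
  set Q : Matrix (Fin n) (Fin n) ℂ := star Wc * Vc with hQdef
  have hQ : Q * star Q = 1 := by
    have h1 : star Q = star Vc * Wc := by rw [hQdef, StarMul.star_mul, star_star]
    rw [hQdef, h1, mul_assoc, ← mul_assoc Vc (star Vc) Wc, mem_unitaryGroup_iff.mp V.2,
      one_mul, mem_unitaryGroup_iff'.mp hM.eigenvectorUnitary.2]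
  calc |∑ i, ∑ j, hM.eigenvalues i * s j * Complex.normSq (Q i j)|
      ≤ ∑ i, |∑ j, hM.eigenvalues i * s j * Complex.normSq (Q i j)| :=
        Finset.abs_sum_le_sum_abs _ _
    _ ≤ ∑ i, |hM.eigenvalues i| := by
        refine Finset.sum_le_sum fun i _ => ?_
        calc |∑ j, hM.eigenvalues i * s j * Complex.normSq (Q i j)|
            ≤ ∑ j, |hM.eigenvalues i * s j * Complex.normSq (Q i j)| :=
              Finset.abs_sum_le_sum_abs _ _
          _ ≤ ∑ j, |hM.eigenvalues i| * Complex.normSq (Q i j) := by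
              refine Finset.sum_le_sum fun j _ => ?_
              rw [abs_mul, abs_mul, abs_of_nonneg (Complex.normSq_nonneg _)]
              exact mul_le_mul_of_nonneg_right
                (mul_le_of_le_one_right (abs_nonneg _) (hs j)) (Complex.normSq_nonneg _)
          _ = |hM.eigenvalues i| := by rw [← Finset.mul_sum, row_norm Q hQ i, mul_one]

lemma pair_eq {M : Matrix (Fin n) (Fin n) ℂ} (hM : M.IsHermitian) (s : Fin n → ℝ) :
    (Matrix.trace (M * ((hM.eigenvectorUnitary : Matrix (Fin n) (Fin n) ℂ) *
        diagonal (fun i => (s i : ℂ)) *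
        star (hM.eigenvectorUnitary : Matrix (Fin n) (Fin n) ℂ)))).re =
    ∑ i, hM.eigenvalues i * s i := by
  have h2 : Matrix.trace (M * ((hM.eigenvectorUnitary : Matrix (Fin n) (Fin n) ℂ) *
      diagonal (fun i => (s i : ℂ)) * star (hM.eigenvectorUnitary : Matrix (Fin n) (Fin n) ℂ))) =
      Matrix.trace (((hM.eigenvectorUnitary : Matrix (Fin n) (Fin n) ℂ) *
        diagonal (RCLike.ofReal ∘ hM.eigenvalues) *
        star (hM.eigenvectorUnitary : Matrix (Fin n) (Fin n) ℂ)) *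
      ((hM.eigenvectorUnitary : Matrix (Fin n) (Fin n) ℂ) * diagonal (fun i => (s i : ℂ)) *
        star (hM.eigenvectorUnitary : Matrix (Fin n) (Fin n) ℂ))) := by
    rw [← spectral_theorem' hM]
  rw [h2, ofReal_comp_eig hM, pair_val hM.eigenvectorUnitary hM.eigenvectorUnitary hM.eigenvalues s,
    mem_unitaryGroup_iff'.mp hM.eigenvectorUnitary.2]
  refine Finset.sum_congr rfl fun i _ => ?_
  rw [Finset.sum_eq_single i]
  · rw [Matrix.one_apply_eq]
    simp
  · intro j _ hji
    rw [Matrix.one_apply_ne (Ne.symm hji)]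
    simp
  · intro h
    exact absurd (Finset.mem_univ i) h

lemma slope_nonneg {h : ℝ → ℝ} {d : ℝ} (hd : HasDerivAt h d 0) (h0 : h 0 = 0)
    (hpos : ∀ t, 0 ≤ t → 0 ≤ h t) : 0 ≤ d := by
  have h1 : Filter.Tendsto (slope h 0) (nhdsWithin 0 (Set.Ioi 0)) (nhds d) :=
    (hasDerivAt_iff_tendsto_slope.mp hd).mono_left
      (nhdsWithin_mono _ (fun x hx => ne_of_gt hx))
  refine ge_of_tendsto h1 ?_
  filter_upwards [self_mem_nhdsWithin] with t ht
  have ht' : (0:ℝ) < t := ht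
  rw [slope_def_field, h0, sub_zero, sub_zero]
  exact div_nonneg (hpos t ht'.le) ht'.le

section genexp

variable {E : Type*} [NormedAddCommGroup E] [NormedSpace ℂ E] [FiniteDimensional ℂ E]
  (L : E →L[ℂ] E)

lemma g_hasSum (t : ℝ) (X : E) :
    HasSum (fun k : ℕ => ((Nat.factorial k : ℕ) : ℂ)⁻¹ • ((((t:ℂ) • L) ^ k) X))
      ((NormedSpace.exp ((t:ℂ) • L)) X) := by
  haveI := FiniteDimensional.complete ℂ E
  have h1 := (NormedSpace.expSeries_summable' (𝕂 := ℂ) ((t:ℂ) • L)).hasSum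
  have h2 := h1.mapL (ContinuousLinearMap.apply ℂ E X)
  rw [NormedSpace.exp_eq_tsum (𝕂 := ℂ)]
  simpa using h2

lemma g_exp0 (X : E) : (NormedSpace.exp (((0:ℝ):ℂ) • L)) X = X := by
  rw [Complex.ofReal_zero, zero_smul, NormedSpace.exp_zero]
  rfl

lemma g_deriv_apply (X : E) (ψ : E →L[ℂ] ℂ) :
    HasDerivAt (fun u : ℝ => (ψ ((NormedSpace.exp ((u:ℂ) • L)) X)).re) (ψ (L X)).re 0 := by
  haveI := FiniteDimensional.complete ℂ E
  have hC : HasDerivAt (fun z : ℂ => NormedSpace.exp (z • L)) L (((0:ℝ):ℂ)) := by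
    simpa using hasDerivAt_exp_smul_const (𝕂 := ℂ) L (0:ℂ)
  have hFr : HasDerivAt (fun u : ℝ => NormedSpace.exp ((u:ℂ) • L)) L 0 := by
    simpa [Function.comp_def] using hC.scomp (0:ℝ) Complex.ofRealCLM.hasDerivAt
  let Ψ : (E →L[ℂ] E) →L[ℝ] ℝ :=
    Complex.reCLM.comp ((ψ.comp (ContinuousLinearMap.apply ℂ E X)).restrictScalars ℝ)
  exact (Ψ.hasFDerivAt).comp_hasDerivAt (0:ℝ) hFr

end genexp

section expstuff

variable (L : Matrix (Fin n) (Fin n) ℂ →L[ℂ] Matrix (Fin n) (Fin n) ℂ)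

lemma exp_apply_hasSum (t : ℝ) (X : Matrix (Fin n) (Fin n) ℂ) :
    HasSum (fun k : ℕ => ((Nat.factorial k : ℕ) : ℂ)⁻¹ • ((((t:ℂ) • L) ^ k) X))
      ((expL ((t:ℂ) • L)) X) := by
  exact g_hasSum L t X

lemma exp_apply_isHermitian
    (hL : ∀ X : Matrix (Fin n) (Fin n) ℂ, X.IsHermitian → X.trace = 0 →
      (L X).IsHermitian ∧ (L X).trace = 0)
    (t : ℝ) {X : Matrix (Fin n) (Fin n) ℂ} (hX : X.IsHermitian) (h0 : X.trace = 0) :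
    ((expL ((t:ℂ) • L)) X).IsHermitian := by
  have hiter : ∀ k : ℕ, ((L ^ k) X).IsHermitian ∧ ((L ^ k) X).trace = 0 := by
    intro k
    induction k with
    | zero => simpa using ⟨hX, h0⟩
    | succ k ih =>
      rw [pow_succ']
      have : ((L * L ^ k) X) = L ((L ^ k) X) := rfl
      rw [this]
      exact hL _ ih.1 ih.2
  have hterm : ∀ k : ℕ, (((Nat.factorial k : ℕ) : ℂ)⁻¹ • ((((t:ℂ) • L) ^ k) X)).IsHermitian := by
    intro k
    have h3 : ∀ m : ℕ, (((t:ℂ) • L) ^ m) X = (t:ℂ)^m • ((L ^ m) X) := by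
      intro m
      induction m with
      | zero => simp
      | succ m ih =>
        have h5 : (((t:ℂ) • L) ^ (m+1)) X = ((t:ℂ) • L) ((((t:ℂ) • L) ^ m) X) := by
          rw [pow_succ']; rfl
        have h4 : L ((L ^ m) X) = (L ^ (m+1)) X := by rw [pow_succ']; rfl
        rw [h5, ih, ContinuousLinearMap.smul_apply, _root_.map_smul, smul_smul, h4, ← pow_succ']
    rw [Matrix.IsHermitian, h3 k, Matrix.conjTranspose_smul, Matrix.conjTranspose_smul,
      (hiter k).1.eq]
    congr 1
    · simp
    · congr 1
      simp [Complex.star_def, map_pow, Complex.conj_ofReal]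
  have hclosed : IsClosed {A : Matrix (Fin n) (Fin n) ℂ | A.IsHermitian} :=
    isClosed_eq (continuous_id.matrix_conjTranspose) continuous_id
  refine hclosed.mem_of_tendsto (exp_apply_hasSum L t X).tendsto_sum_nat
    (Filter.Eventually.of_forall fun m => ?_)
  show (∑ k ∈ Finset.range m, ((Nat.factorial k : ℕ) : ℂ)⁻¹ • ((((t:ℂ) • L) ^ k) X)).IsHermitian
  rw [Matrix.IsHermitian, Matrix.conjTranspose_sum]
  exact Finset.sum_congr rfl fun k _ => (hterm k).eq

end expstuff

lemma tn_neg (b : Matrix (Fin n) (Fin n) ℂ) : traceNorm (-b) = traceNorm b := by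
  rw [traceNorm_eq_cfc, traceNorm_eq_cfc]
  simp

end GapAux

/-- Gap-controlled sensitivity bound: if the semigroup `exp(tL)` decays at rate `g` in trace
norm on the traceless Hermitian subspace, then `g‖δρ‖₁ ≤ ‖L(δρ)‖₁`; in particular any
traceless Hermitian solution of the Poisson-type equation `L(δρ) = −b` satisfies
`‖δρ‖₁ ≤ (1/g)‖b‖₁`. -/
theorem gap_controlled_sensitivity_bound {n : ℕ}
    (L : Matrix (Fin n) (Fin n) ℂ →L[ℂ] Matrix (Fin n) (Fin n) ℂ)
    (hL_preserve : ∀ X : Matrix (Fin n) (Fin n) ℂ, X.IsHermitian → X.trace = 0 →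
      (L X).IsHermitian ∧ (L X).trace = 0)
    (g : ℝ) (hg : 0 < g)
    (hdecay : ∀ X : Matrix (Fin n) (Fin n) ℂ, X.IsHermitian → X.trace = 0 →
      ∀ t : ℝ, 0 ≤ t →
        traceNorm ((@NormedSpace.exp _ _ _
            (@NonUnitalSeminormedRing.toIsTopologicalRing _
              (@ContinuousLinearMap.toNormedRing ℂ _ _ _ _).toSeminormedRing.toNonUnitalSeminormedRing) ((t : ℂ) • L)) X) ≤ Real.exp (-g * t) * traceNorm X) :
    (∀ δρ : Matrix (Fin n) (Fin n) ℂ, δρ.IsHermitian → δρ.trace = 0 →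
        g * traceNorm δρ ≤ traceNorm (L δρ)) ∧
    (∀ δρ b : Matrix (Fin n) (Fin n) ℂ, δρ.IsHermitian → δρ.trace = 0 →
        L δρ = -b → traceNorm δρ ≤ (1 / g) * traceNorm b) := by
  classical
  have main : ∀ δρ : Matrix (Fin n) (Fin n) ℂ, δρ.IsHermitian → δρ.trace = 0 →
      g * traceNorm δρ ≤ traceNorm (L δρ) := by
    intro δρ hH h0
    set lam := hH.eigenvalues with hlam
    set s : Fin n → ℝ := fun i => if lam i < 0 then -1 else 1 with hs
    have hs1 : ∀ j, |s j| ≤ 1 := by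
      intro j
      rw [hs]
      dsimp only
      split <;> simp
    set U := hH.eigenvectorUnitary with hU
    set S : Matrix (Fin n) (Fin n) ℂ := (U : Matrix (Fin n) (Fin n) ℂ) *
      Matrix.diagonal (fun i => (s i : ℂ)) * star (U : Matrix (Fin n) (Fin n) ℂ) with hS
    set f : ℝ → ℝ :=
      fun t => (Matrix.trace (((expL ((t:ℂ) • L)) δρ) * S)).re with hf
    have hLH := hL_preserve δρ hH h0
    have hexp0 : (expL (((0:ℝ):ℂ) • L)) δρ = δρ := GapAux.g_exp0 L δρ
    have hf0 : f 0 = traceNorm δρ := by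
      rw [hf]
      dsimp only
      rw [hexp0, hS, hU, GapAux.pair_eq hH s, GapAux.tn_herm hH]
      refine Finset.sum_congr rfl fun i _ => ?_
      rw [hs]
      dsimp only
      rw [hlam]
      split <;> rename_i hcase
      · rw [abs_of_neg hcase]; ring
      · rw [abs_of_nonneg (not_lt.mp hcase)]; ring
    have htn0 : 0 ≤ traceNorm δρ := by
      rw [GapAux.tn_herm hH]
      exact Finset.sum_nonneg fun i _ => abs_nonneg _
    have hft : ∀ t : ℝ, 0 ≤ t → f t ≤ Real.exp (-g * t) * traceNorm δρ := by
      intro t ht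
      have hHt := GapAux.exp_apply_isHermitian L hL_preserve t hH h0
      refine (le_abs_self _).trans ?_
      exact (GapAux.pair_bound hHt U s hs1).trans (hdecay δρ hH h0 t ht)
    set ψc : Matrix (Fin n) (Fin n) ℂ →L[ℂ] ℂ := LinearMap.toContinuousLinearMap
      (Matrix.traceLinearMap (Fin n) ℂ ℂ ∘ₗ LinearMap.mulRight ℂ S) with hψc
    have hfD : HasDerivAt f ((Matrix.trace ((L δρ) * S)).re) 0 := by
      have h2 : HasDerivAt (fun u : ℝ => (ψc ((expL ((u:ℂ) • L)) δρ)).re) (ψc (L δρ)).re 0 :=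
        GapAux.g_deriv_apply L δρ ψc
      simpa [hf, hψc] using h2
    have hcomp : (Matrix.trace ((L δρ) * S)).re ≤ -g * traceNorm δρ := by
      have hre : HasDerivAt (fun t : ℝ => Real.exp (-g * t) * traceNorm δρ)
          (-g * traceNorm δρ) 0 := by
        have h1 : HasDerivAt (fun t : ℝ => -g * t) (-g) 0 := by
          simpa using (hasDerivAt_id (0:ℝ)).const_mul (-g)
        have h3 := (h1.exp).mul_const (traceNorm δρ)
        simpa using h3
      have hD := hre.sub hfD
      have hnn := GapAux.slope_nonneg hD (by simp [hf0])
        (fun t ht => sub_nonneg.mpr (hft t ht))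
      linarith
    have hpb := GapAux.pair_bound hLH.1 U s hs1
    have h5 := (abs_le.mp hpb).1
    linarith
  refine ⟨main, ?_⟩
  intro δρ b hH h0 hPoisson
  have h1 := main δρ hH h0
  have h2 : traceNorm (L δρ) = traceNorm b := by
    rw [hPoisson]
    exact GapAux.tn_neg b
  rw [h2] at h1
  calc traceNorm δρ = (1/g) * (g * traceNorm δρ) := by field_simp
    _ ≤ (1/g) * traceNorm b := by
        exact mul_le_mul_of_nonneg_left h1 (by positivity)
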